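/- Let n ≥ 1 and let A ⊆ [0,1]^n be an antichain with respect to the coordinatewise partial order. Then A has n-dimensional Lebesgue measure zero. -/

import Mathlib

open MeasureTheory

/-- Any antichain in `[0,1]^n` (coordinatewise order) has
`n`-dimensional Lebesgue measure zero. -/
theorem statement0 (n : ℕ) (hn : 1 ≤ n) (A : Set (EuclideanSpace ℝ (Fin n)))
    (hA : A ⊆ {x : EuclideanSpace ℝ (Fin n) | ∀ i, x i ∈ Set.Icc (0 : ℝ) 1})
    (hanti : ∀ x ∈ A, ∀ y ∈ A, (∀ i, x i ≤ y i) → x = y) :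
    volume A = 0 := by
  classical
  obtain ⟨m, rfl⟩ : ∃ m, n = m + 1 := ⟨n - 1, (Nat.succ_pred_eq_of_pos hn).symm⟩
  clear hn hA
  set l : Fin (m + 1) := Fin.last m with hl
  set u : EuclideanSpace ℝ (Fin (m + 1)) → (Fin m → ℝ) :=
    fun x i => x i.castSucc - x l with hu
  -- Key Lipschitz estimate
  have key : ∀ x ∈ A, ∀ y ∈ A, y l - x l ≤ dist (u x) (u y) := by
    intro x hx y hy
    by_contra h
    push_neg at h
    have hd : (0 : ℝ) ≤ dist (u x) (u y) := dist_nonneg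
    have hle : ∀ i, x i ≤ y i := by
      intro i
      induction i using Fin.lastCases with
      | last => simp only [← hl]; linarith
      | cast i =>
          have h1 : dist (u x i) (u y i) ≤ dist (u x) (u y) := dist_le_pi_dist (u x) (u y) i
          have h2 := abs_le.1 (by rwa [Real.dist_eq] at h1)
          simp only [hu] at h2
          have := h2.1
          linarith
    have hxy := hanti x hx y hy hle
    rw [hxy, dist_self, sub_self] at h
    exact lt_irrefl 0 h
  have key' : ∀ x ∈ A, ∀ y ∈ A, |y l - x l| ≤ dist (u x) (u y) := by
    intro x hx y hy
    rcases abs_cases (y l - x l) with ⟨he, _⟩ | ⟨he, _⟩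
    · rw [he]; exact key x hx y hy
    · rw [he, neg_sub]
      rw [dist_comm]
      exact key y hy x hx
  set D : Set (Fin m → ℝ) := u '' A with hD
  set f : (Fin m → ℝ) → ℝ := fun w => if h : w ∈ D then h.choose l else 0 with hf
  have hfA : ∀ x ∈ A, f (u x) = x l := by
    intro x hx
    have hm : u x ∈ D := ⟨x, hx, rfl⟩
    have hc := hm.choose_spec
    have h0 := key' x hx hm.choose hc.1
    rw [hc.2, dist_self] at h0
    have : hm.choose l = x l := by
      have := abs_nonpos_iff.mp (le_of_le_of_eq h0 rfl)
      linarith [sub_eq_zero.mp this]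
    simp only [hf, dif_pos hm]
    exact this
  have hlip : LipschitzOnWith 1 f D := by
    apply LipschitzOnWith.of_dist_le_mul
    rintro w ⟨x, hx, rfl⟩ z ⟨y, hy, rfl⟩
    rw [hfA x hx, hfA y hy, Real.dist_eq, NNReal.coe_one, one_mul]
    rw [dist_comm]
    exact key' y hy x hx
  obtain ⟨g, hg, hfg⟩ := hlip.extend_real
  -- The null superset
  set N : Set (Fin (m + 1) → ℝ) := {x | x l = g (fun i => x i.castSucc - x l)} with hN
  have hgc : Continuous g := hg.continuous
  have hNmeas : MeasurableSet N := by
    apply measurableSet_eq_fun (measurable_pi_apply l)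
    exact hgc.measurable.comp (by fun_prop)
  -- A is contained in N (as sets of functions)
  have hsub : ∀ x ∈ A, x l = g (fun i => x i.castSucc - x l) := by
    intro x hx
    have : u x ∈ D := ⟨x, hx, rfl⟩
    have := hfg this
    rw [← this, hfA x hx]
  -- measure of N is zero
  have hNzero : volume N = 0 := by
    set G : Set (ℝ × (Fin m → ℝ)) := {p | p.1 = g p.2} with hG
    have hGmeas : MeasurableSet G :=
      measurableSet_eq_fun measurable_fst (hgc.measurable.comp measurable_snd)
    have hGzero : volume G = 0 := by
      rw [Measure.volume_eq_prod, Measure.prod_apply_symm hGmeas]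
      have : ∀ y : Fin m → ℝ, volume ((fun x : ℝ => (x, y)) ⁻¹' G) = 0 := by
        intro y
        have : (fun x : ℝ => (x, y)) ⁻¹' G = {g y} := by
          ext t; simp [hG]
        rw [this, Real.volume_singleton]
      simp only [this, lintegral_zero]
    have e := MeasurableEquiv.piFinSuccAbove (fun _ : Fin (m + 1) => ℝ) l
    clear e
    set S : ℝ × (Fin m → ℝ) → ℝ × (Fin m → ℝ) := fun p => (p.1, fun i => p.2 i - p.1) with hS
    have hSmp : MeasurePreserving S volume volume := by
      rw [Measure.volume_eq_prod]
      have hgm : Measurable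
          (Function.uncurry fun (a : ℝ) (c : Fin m → ℝ) => (fun i : Fin m => c i - a)) := by
        fun_prop
      have hmap : ∀ a : ℝ,
          Measure.map (fun (c : Fin m → ℝ) => (fun i : Fin m => c i - a)) volume = volume := by
        intro a
        have h2 : (fun c : Fin m → ℝ => fun i : Fin m => c i - a)
            = fun c : Fin m → ℝ => c + (fun _ => -a) := by
          funext c i; simp [sub_eq_add_neg]
        rw [h2]
        exact map_add_right_eq_self volume _
      exact MeasurePreserving.skew_product (f := id)
        (g := fun (a : ℝ) (c : Fin m → ℝ) => (fun i : Fin m => c i - a))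
        (MeasurePreserving.id _) hgm (Filter.Eventually.of_forall hmap)
    have hemp : MeasurePreserving (MeasurableEquiv.piFinSuccAbove (fun _ : Fin (m + 1) => ℝ) l)
        volume volume :=
      volume_preserving_piFinSuccAbove (fun _ : Fin (m + 1) => ℝ) l
    have hcomp : MeasurePreserving
        (S ∘ (MeasurableEquiv.piFinSuccAbove (fun _ : Fin (m + 1) => ℝ) l)) volume volume :=
      hSmp.comp hemp
    have hNeq : N = (S ∘ (MeasurableEquiv.piFinSuccAbove (fun _ : Fin (m + 1) => ℝ) l)) ⁻¹' G := by
      ext x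
      simp only [hN, Set.mem_setOf_eq, Set.mem_preimage, Function.comp_apply, hS, hG,
        MeasurableEquiv.piFinSuccAbove_apply, hl, Fin.insertNthEquiv,
        Equiv.coe_fn_symm_mk, Fin.removeNth, Fin.succAbove_last]
    rw [hNeq]
    rw [hcomp.measure_preimage hGmeas.nullMeasurableSet]
    exact hGzero
  -- transfer back to EuclideanSpace
  have hmp := EuclideanSpace.volume_preserving_symm_measurableEquiv_toLp (Fin (m + 1))
  have hss : A ⊆ (MeasurableEquiv.toLp 2 (Fin (m + 1) → ℝ)).symm ⁻¹' N :=
    fun x hx => hsub x hx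
  refine measure_mono_null hss ?_
  rw [hmp.measure_preimage hNmeas.nullMeasurableSet]
  exact hNzero
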